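/- If s is a quasi-Sturmian word and W is a factor of s, then there exists a positive integer t such that W^t (the concatenation of t copies of W) is not a factor of s. -/

import Mathlib

/-- Number of distinct factors of length `n` of the infinite word `x`. -/
noncomputable def wordComplexity {A : Type*} (x : ℕ → A) (n : ℕ) : ℕ :=
  Set.ncard {w : Fin n → A | ∃ j : ℕ, ∀ i : Fin n, w i = x (j + i)}

/-- Length of the smallest prefix of `x` containing two (possibly overlapping)
occurrences of some word of length `n` (1-based length, word indexed from 0). -/
noncomputable def returnTime {A : Type*} (x : ℕ → A) (n : ℕ) : ℕ :=
  sInf {m : ℕ | ∃ i : ℕ, i + n < m ∧ ∀ k < n, x (i + k) = x (m - n + k)}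

/-- `w` occurs as a factor (finite subword) of the infinite word `x`. -/
def IsFactor {A : Type*} (x : ℕ → A) (w : List A) : Prop :=
  ∃ j : ℕ, ∀ i : Fin w.length, w.get i = x (j + i)

/-- `x` is ultimately periodic. -/
def UltimatelyPeriodic {A : Type*} (x : ℕ → A) : Prop :=
  ∃ T : ℕ, 1 ≤ T ∧ ∃ N : ℕ, ∀ k ≥ N, x (k + T) = x k

/-- `w` is a right special factor of `x`. -/
def RightSpecial {A : Type*} (x : ℕ → A) (w : List A) : Prop :=
  ∃ a b : A, a ≠ b ∧ IsFactor x (w ++ [a]) ∧ IsFactor x (w ++ [b])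

/-- `x` is quasi-Sturmian: `p(n, x) = n + k` for all `n ≥ n₀`. -/
def QuasiSturmian {A : Type*} (x : ℕ → A) : Prop :=
  ∃ k n₀ : ℕ, 0 < k ∧ ∀ n ≥ n₀, wordComplexity x n = n + k


set_option linter.unusedVariables false
set_option linter.unusedSectionVars false

namespace QS4aux

variable {A : Type*} [Fintype A]

def Win (s : ℕ → A) (n j : ℕ) : Fin n → A := fun i => s (j + i)

def Fac (s : ℕ → A) (n : ℕ) : Set (Fin n → A) := Set.range (Win s n)

def PerW (v : ℕ → A) {n : ℕ} (u : Fin n → A) : Prop :=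
  ∃ φ : ℕ, ∀ i : Fin n, u i = v (φ + i)

def Special (s : ℕ → A) (n : ℕ) (u : Fin n → A) : Prop :=
  ∃ j j' : ℕ, Win s n j = u ∧ Win s n j' = u ∧ s (j + n) ≠ s (j' + n)

lemma fac_finite (s : ℕ → A) (n : ℕ) : (Fac s n).Finite := Set.toFinite _

lemma win_mem (s : ℕ → A) (n j : ℕ) : Win s n j ∈ Fac s n := ⟨j, rfl⟩

lemma wc_eq (s : ℕ → A) (n : ℕ) : wordComplexity s n = (Fac s n).ncard := by
  unfold wordComplexity Fac
  congr 1
  ext w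
  constructor
  · rintro ⟨j, hj⟩
    exact ⟨j, funext fun i => (hj i).symm⟩
  · rintro ⟨j, rfl⟩
    exact ⟨j, fun i => rfl⟩

lemma fac_card (s : ℕ → A) (n : ℕ) :
    (Fac s n).ncard = ((fac_finite s n).toFinset).card := by
  rw [← Set.ncard_coe_finset]
  congr 1
  exact (Set.Finite.coe_toFinset _).symm

/-- Morse–Hedlund style: an ultimately periodic word cannot have complexity `n + k`, `k ≥ 1`. -/
lemma mh (s : ℕ → A) (k n₀ : ℕ) (hk : 0 < k)
    (hC : ∀ n ≥ n₀, wordComplexity s n = n + k)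
    (hup : UltimatelyPeriodic s) : False := by
  classical
  haveI : DecidableEq (Fin 0 → A) := Classical.decEq _
  obtain ⟨T, hT, N, hN⟩ := hup
  -- every window equals a window starting before N + T
  have hrec : ∀ n j, ∃ j' < N + T, Win s n j' = Win s n j := by
    intro n j
    induction j using Nat.strong_induction_on with
    | _ j IH =>
      by_cases hj : j < N + T
      · exact ⟨j, hj, rfl⟩
      · push_neg at hj
        have hw : Win s n (j - T) = Win s n j := by
          funext i
          show s (j - T + i) = s (j + i)
          have h1 : j - T + (i : ℕ) ≥ N := by omega
          have := hN (j - T + i) h1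
          have h2 : j - T + (i : ℕ) + T = j + i := by omega
          rw [h2] at this
          exact this.symm
        obtain ⟨j', hj', hw'⟩ := IH (j - T) (by omega)
        exact ⟨j', hj', hw'.trans hw⟩
  have hsub : ∀ n, Fac s n ⊆ ↑((Finset.range (N + T)).image (Win s n)) := by
    intro n x hx
    obtain ⟨j, rfl⟩ := hx
    obtain ⟨j', hj', hw⟩ := hrec n j
    rw [Finset.mem_coe, Finset.mem_image]
    exact ⟨j', Finset.mem_range.2 hj', hw⟩
  have hbound : ∀ n, wordComplexity s n ≤ N + T := by
    intro n
    rw [wc_eq]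
    calc (Fac s n).ncard ≤ (((Finset.range (N + T)).image (Win s n) : Finset _) : Set _).ncard :=
          Set.ncard_le_ncard (hsub n) (Finset.finite_toSet _)
      _ = ((Finset.range (N + T)).image (Win s n)).card := Set.ncard_coe_finset _
      _ ≤ (Finset.range (N + T)).card := Finset.card_image_le
      _ = N + T := Finset.card_range _
  have h1 := hC (n₀ + N + T) (by omega)
  have h2 := hbound (n₀ + N + T)
  omega

/-- at most one special factor of each length `n ≥ n₀`. -/
lemma special_unique (s : ℕ → A) (k n₀ : ℕ)
    (hC : ∀ m ≥ n₀, wordComplexity s m = m + k)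
    {n : ℕ} (hn : n₀ ≤ n) {u₁ u₂ : Fin n → A}
    (h₁ : Special s n u₁) (h₂ : Special s n u₂) : u₁ = u₂ := by
  by_contra hne
  obtain ⟨j₁, j₂, hw₁, hw₂, hl₁⟩ := h₁
  obtain ⟨j₃, j₄, hw₃, hw₄, hl₂⟩ := h₂
  classical
  haveI : DecidableEq (Fin n → A) := Classical.decEq _
  haveI : DecidableEq (Fin (n+1) → A) := Classical.decEq _
  set σ : (Fin (n+1) → A) → (Fin n → A) := fun x => x ∘ Fin.castSucc with hσ
  have hσwin : ∀ j, σ (Win s (n+1) j) = Win s n j := by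
    intro j; funext i; rfl
  have hlast : ∀ j, Win s (n+1) j (Fin.last n) = s (j + n) := by
    intro j; rfl
  set F1 := (fac_finite s (n+1)).toFinset with hF1
  set F0 := (fac_finite s n).toFinset with hF0
  have hmem1 : ∀ x, x ∈ F1 ↔ x ∈ Fac s (n+1) := fun x => Set.Finite.mem_toFinset _
  have hmem0 : ∀ x, x ∈ F0 ↔ x ∈ Fac s n := fun x => Set.Finite.mem_toFinset _
  have hmap : ∀ x ∈ F1, σ x ∈ F0 := by
    intro x hx
    obtain ⟨j, rfl⟩ := (hmem1 x).1 hx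
    rw [hmem0, hσwin]
    exact win_mem s n j
  set fib : (Fin n → A) → ℕ := fun u => (F1.filter (fun x => σ x = u)).card with hfibdef
  have hcardsum : F1.card = ∑ u ∈ F0, fib u :=
    Finset.card_eq_sum_card_fiberwise hmap
  -- every fiber is nonempty
  have hfib1 : ∀ u ∈ F0, 1 ≤ fib u := by
    intro u hu
    obtain ⟨j, rfl⟩ := (hmem0 u).1 hu
    have : Win s (n+1) j ∈ F1.filter (fun x => σ x = Win s n j) := by
      rw [Finset.mem_filter]
      exact ⟨(hmem1 _).2 (win_mem _ _ _), hσwin j⟩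
    exact Finset.card_pos.mpr ⟨_, this⟩
  -- fibers over special words have at least two elements
  have hfib2 : ∀ (u : Fin n → A), Special s n u → 2 ≤ fib u := by
    rintro u ⟨ja, jb, hwa, hwb, hl⟩
    have ha : Win s (n+1) ja ∈ F1.filter (fun x => σ x = u) := by
      rw [Finset.mem_filter]
      exact ⟨(hmem1 _).2 (win_mem _ _ _), by rw [hσwin]; exact hwa⟩
    have hb : Win s (n+1) jb ∈ F1.filter (fun x => σ x = u) := by
      rw [Finset.mem_filter]
      exact ⟨(hmem1 _).2 (win_mem _ _ _), by rw [hσwin]; exact hwb⟩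
    have hab : Win s (n+1) ja ≠ Win s (n+1) jb := by
      intro h
      apply hl
      have := congrFun h (Fin.last n)
      rw [hlast, hlast] at this
      exact this
    exact Finset.one_lt_card.mpr ⟨_, ha, _, hb, hab⟩
  have hu1 : u₁ ∈ F0 := by rw [hmem0, ← hw₁]; exact win_mem _ _ _
  have hu2 : u₂ ∈ F0 := by rw [hmem0, ← hw₃]; exact win_mem _ _ _
  have hu2' : u₂ ∈ F0.erase u₁ := Finset.mem_erase.mpr ⟨fun h => hne h.symm, hu2⟩
  have e1 : ∑ u ∈ F0, fib u = fib u₁ + ∑ u ∈ F0.erase u₁, fib u :=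
    (Finset.add_sum_erase F0 fib hu1).symm
  have e2 : ∑ u ∈ F0.erase u₁, fib u = fib u₂ + ∑ u ∈ (F0.erase u₁).erase u₂, fib u :=
    (Finset.add_sum_erase _ fib hu2').symm
  have e3 : ((F0.erase u₁).erase u₂).card ≤ ∑ u ∈ (F0.erase u₁).erase u₂, fib u := by
    rw [Finset.card_eq_sum_ones]
    apply Finset.sum_le_sum
    intro u hu
    exact hfib1 u (Finset.mem_of_mem_erase (Finset.mem_of_mem_erase hu))
  have c1 : (F0.erase u₁).card = F0.card - 1 := Finset.card_erase_of_mem hu1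
  have c2 : ((F0.erase u₁).erase u₂).card = (F0.erase u₁).card - 1 :=
    Finset.card_erase_of_mem hu2'
  have cpos : 1 ≤ (F0.erase u₁).card := Finset.card_pos.mpr ⟨_, hu2'⟩
  have h2a : 2 ≤ fib u₁ := hfib2 u₁ ⟨j₁, j₂, hw₁, hw₂, hl₁⟩
  have h2b : 2 ≤ fib u₂ := hfib2 u₂ ⟨j₃, j₄, hw₃, hw₄, hl₂⟩
  have hcard0 : F0.card = n + k := by
    have := hC n hn
    rw [wc_eq, fac_card] at this
    exact this
  have hcard1 : F1.card = (n + 1) + k := by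
    have := hC (n+1) (by omega)
    rw [wc_eq, fac_card] at this
    exact this
  omega

end QS4aux

namespace QS4b
open QS4aux
variable {A : Type*} [Fintype A]

lemma vmul (v : ℕ → A) (p : ℕ) (hv : ∀ i, v (i + p) = v i) :
    ∀ t a, v (a + p * t) = v a := by
  intro t
  induction t with
  | zero => intro a; simp
  | succ t IH =>
    intro a
    have h : a + p * (t + 1) = (a + p * t) + p := by ring
    rw [h, hv, IH]

lemma vmod (v : ℕ → A) (p : ℕ) (hp : 0 < p) (hv : ∀ i, v (i + p) = v i)
    (φ i : ℕ) : v (φ % p + i) = v (φ + i) := by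
  have hmd := Nat.mod_add_div φ p
  have h : φ + i = (φ % p + i) + p * (φ / p) := by omega
  rw [h, vmul v p hv]

/-- If no word matching the periodic pattern is special, then `s` is ultimately periodic. -/
lemma perforce (s v : ℕ → A) (p : ℕ) (hp : 0 < p)
    (hv : ∀ i, v (i + p) = v i)
    (hPOW : ∀ L, ∃ j, ∀ m < L, s (j + m) = v m)
    {n : ℕ} (hpn : p ≤ n)
    (hns : ∀ u : Fin n → A, PerW v u → ¬ Special s n u) :
    UltimatelyPeriodic s := by
  obtain ⟨j₀, hj₀⟩ := hPOW n
  have claim : ∀ m, s (j₀ + m) = v m := by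
    intro m
    induction m using Nat.strong_induction_on with
    | _ m IH =>
      by_cases hm : m < n
      · exact hj₀ m hm
      · push_neg at hm
        set φ := m - n with hφ
        have hφm : φ + n = m := by omega
        have hwin : ∀ i : Fin n, Win s n (j₀ + φ) i = v (φ + i) := by
          intro i
          show s (j₀ + φ + (i : ℕ)) = v (φ + i)
          have h1 : j₀ + φ + (i : ℕ) = j₀ + (φ + i) := by omega
          rw [h1]
          exact IH (φ + i) (by have := i.isLt; omega)
        have hper : PerW v (Win s n (j₀ + φ)) := ⟨φ, hwin⟩
        obtain ⟨jL, hjL⟩ := hPOW (φ % p + n + 1)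
        have hwin2 : Win s n (jL + φ % p) = Win s n (j₀ + φ) := by
          funext i
          show s (jL + φ % p + (i : ℕ)) = _
          have h1 : jL + φ % p + (i : ℕ) = jL + (φ % p + i) := by omega
          rw [h1, hjL (φ % p + i) (by have := i.isLt; omega),
            vmod v p hp hv φ i]
          exact (hwin i).symm
        have hnext : s (jL + φ % p + n) = v m := by
          have h1 : jL + φ % p + n = jL + (φ % p + n) := by omega
          rw [h1, hjL (φ % p + n) (by omega), vmod v p hp hv φ n, hφm]
        have hforced : ∀ a b, Win s n a = Win s n (j₀ + φ) → Win s n b = Win s n (j₀ + φ) →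
            s (a + n) = s (b + n) := by
          intro a b ha hb
          by_contra hcon2
          exact hns _ hper ⟨a, b, ha, hb, hcon2⟩
        have heq : j₀ + m = (j₀ + φ) + n := by omega
        rw [heq, hforced (j₀ + φ) (jL + φ % p) rfl hwin2]
        exact hnext
  refine ⟨p, hp, j₀, ?_⟩
  intro i hi
  calc s (i + p) = s (j₀ + ((i - j₀) + p)) := by
        congr 1; omega
    _ = v ((i - j₀) + p) := claim _
    _ = v (i - j₀) := hv _
    _ = s (j₀ + (i - j₀)) := (claim _).symm
    _ = s i := by congr 1; omega

/-- A run of consecutive non-periodic windows followed by a periodic window is short. -/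
lemma runbound (s v : ℕ → A) (p k n₀ : ℕ) (hp : 0 < p) (hk : 0 < k)
    (hv : ∀ i, v (i + p) = v i)
    (hPOW : ∀ L, ∃ j, ∀ m < L, s (j + m) = v m)
    (hC : ∀ m ≥ n₀, wordComplexity s m = m + k)
    {n : ℕ} (hn : n₀ ≤ n) (hpn : p ≤ n) {a b : ℕ}
    (hPer : PerW v (Win s n (b + 1)))
    (hNP : ∀ j, a ≤ j → j ≤ b → ¬ PerW v (Win s n j)) :
    b < a + (n + k) := by
  classical
  by_cases hA : ∃ u : Fin n → A, ¬ PerW v u ∧ Special s n u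
  · exfalso
    obtain ⟨u, hu, husp⟩ := hA
    apply mh s k n₀ hk hC
    apply perforce s v p hp hv hPOW hpn
    intro u' hper' hsp'
    exact hu (special_unique s k n₀ hC hn hsp' husp ▸ hper')
  · push_neg at hA
    rcases le_or_gt a b with hab | hab
    swap
    · omega
    have hforce : ∀ j j', a ≤ j → j ≤ b → Win s n j = Win s n j' →
        s (j + n) = s (j' + n) := by
      intro j j' hja hjb heq
      by_contra hcon2
      exact hA (Win s n j) (hNP j hja hjb) ⟨j, j', rfl, heq.symm, hcon2⟩
    have key : ∀ j j', a ≤ j → j < j' → j' ≤ b → Win s n j = Win s n j' → False := by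
      intro j j' hja hjj hj'b heq
      have prop : ∀ i, j' + i ≤ b + 1 → Win s n (j + i) = Win s n (j' + i) := by
        intro i
        induction i with
        | zero => intro _; simpa using heq
        | succ i IH =>
          intro hle
          have IH' := IH (by omega)
          have hnexteq : s (j + i + n) = s (j' + i + n) :=
            hforce (j + i) (j' + i) (by omega) (by omega) IH'
          funext x
          show s (j + (i + 1) + (x : ℕ)) = s (j' + (i + 1) + (x : ℕ))
          by_cases hx : (x : ℕ) + 1 < n
          · have h1 := congrFun IH' ⟨(x : ℕ) + 1, hx⟩
            have e1 : j + (i + 1) + (x : ℕ) = j + i + ((x : ℕ) + 1) := by omega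
            have e2 : j' + (i + 1) + (x : ℕ) = j' + i + ((x : ℕ) + 1) := by omega
            rw [e1, e2]
            exact h1
          · have hxn : (x : ℕ) + 1 = n := by have := x.isLt; omega
            have e1 : j + (i + 1) + (x : ℕ) = j + i + n := by omega
            have e2 : j' + (i + 1) + (x : ℕ) = j' + i + n := by omega
            rw [e1, e2]
            exact hnexteq
      have hfin := prop (b + 1 - j') (by omega)
      have e1 : j + (b + 1 - j') = b + 1 - (j' - j) := by omega
      have e2 : j' + (b + 1 - j') = b + 1 := by omega
      rw [e1, e2] at hfin
      apply hNP (b + 1 - (j' - j)) (by omega) (by omega)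
      rw [hfin]
      exact hPer
    have hinj : Set.InjOn (fun j => Win s n j) ↑(Finset.Icc a b) := by
      intro j hj j' hj' heq
      simp only [Finset.coe_Icc, Set.mem_Icc] at hj hj'
      rcases lt_trichotomy j j' with h | h | h
      · exact (key j j' hj.1 h hj'.2 heq).elim
      · exact h
      · exact (key j' j hj'.1 h hj.2 heq.symm).elim
    have hcard := Finset.card_le_card_of_injOn (fun j => Win s n j)
        (fun j _ => (fac_finite s n).mem_toFinset.mpr (win_mem s n j)) hinj
    have h1 : (Finset.Icc a b).card = b + 1 - a := Nat.card_Icc a b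
    have h2 : (fac_finite s n).toFinset.card = n + k := by
      have := hC n hn
      rw [wc_eq, fac_card] at this
      exact this
    omega

lemma perfar (s v : ℕ → A) (hPOW : ∀ L, ∃ j, ∀ m < L, s (j + m) = v m)
    (n Y : ℕ) : ∃ q ≥ Y, PerW v (Win s n q) := by
  obtain ⟨j₀, hj₀⟩ := hPOW (Y + n)
  refine ⟨max j₀ Y, le_max_right _ _, max j₀ Y - j₀, ?_⟩
  intro i
  show s (max j₀ Y + (i : ℕ)) = v (max j₀ Y - j₀ + (i : ℕ))
  have hle : max j₀ Y - j₀ ≤ Y := by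
    rcases le_total j₀ Y with h | h
    · rw [max_eq_right h]; omega
    · rw [max_eq_left h]; omega
  have h1 : max j₀ Y + (i : ℕ) = j₀ + (max j₀ Y - j₀ + (i : ℕ)) := by
    have := le_max_left j₀ Y; omega
  rw [h1]
  exact hj₀ _ (by have := i.isLt; omega)

lemma nonper_unbounded (s v : ℕ → A) (p k n₀ : ℕ) (hp : 0 < p) (hk : 0 < k)
    (hv : ∀ i, v (i + p) = v i)
    (hC : ∀ m ≥ n₀, wordComplexity s m = m + k)
    {n : ℕ} (hpn : p + 1 ≤ n) :
    ∀ X, ∃ j ≥ X, ¬ PerW v (Win s n j) := by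
  intro X
  by_contra hcon
  push_neg at hcon
  apply mh s k n₀ hk hC
  refine ⟨p, hp, X + (n - 1 - p), ?_⟩
  intro m hm
  set j := m - (n - 1 - p) with hj
  have hjX : X ≤ j := by omega
  obtain ⟨φ, hφ⟩ := hcon j hjX
  have h1 : s (j + (n - 1)) = v (φ + (n - 1)) := hφ ⟨n - 1, by omega⟩
  have h2 : s (j + (n - 1 - p)) = v (φ + (n - 1 - p)) := hφ ⟨n - 1 - p, by omega⟩
  have h3 : v (φ + (n - 1)) = v (φ + (n - 1 - p)) := by
    have h4 := hv (φ + (n - 1 - p))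
    have e : φ + (n - 1 - p) + p = φ + (n - 1) := by omega
    rw [e] at h4
    exact h4
  have e1 : m + p = j + (n - 1) := by omega
  have e2 : m = j + (n - 1 - p) := by omega
  rw [e1, e2, h1, h2, ← h3]

lemma keylemma (s v : ℕ → A) (p k n₀ : ℕ) (hp : 0 < p) (hk : 0 < k)
    (hv : ∀ i, v (i + p) = v i)
    (hC : ∀ m ≥ n₀, wordComplexity s m = m + k)
    (hPOW : ∀ L, ∃ j, ∀ m < L, s (j + m) = v m) : False := by
  classical
  set n' := max n₀ (p + 1) with hn'
  have hn'0 : n₀ ≤ n' := le_max_left _ _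
  have hn'p : p + 1 ≤ n' := le_max_right _ _
  obtain ⟨y₁, hy₁X, hy₁⟩ :=
    nonper_unbounded s v p k n₀ hp hk hv hC (n := n') hn'p (n' + k)
  obtain ⟨x₂, hx₂X, hx₂⟩ :=
    nonper_unbounded s v p k n₀ hp hk hv hC (n := n') hn'p (y₁ + n' + k)
  set D := x₂ - y₁ with hD
  have hDge : n' + k ≤ D := by omega
  set n := n' + D with hn
  have hnn0 : n₀ ≤ n := by omega
  have hnp : p ≤ n := by omega
  have SW : ∀ j j' n₁ n₂, j ≤ j' → j' + n₂ ≤ j + n₁ →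
      PerW v (Win s n₁ j) → PerW v (Win s n₂ j') := by
    rintro j j' n₁ n₂ h1 h2 ⟨φ, hφ⟩
    refine ⟨φ + (j' - j), fun i => ?_⟩
    have hi : (j' - j) + (i : ℕ) < n₁ := by have := i.isLt; omega
    have h5 := hφ ⟨(j' - j) + (i : ℕ), hi⟩
    show s (j' + (i : ℕ)) = v (φ + (j' - j) + (i : ℕ))
    have e1 : j' + (i : ℕ) = j + ((j' - j) + (i : ℕ)) := by omega
    have e2 : φ + (j' - j) + (i : ℕ) = φ + ((j' - j) + (i : ℕ)) := by omega
    rw [e1, e2]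
    exact h5
  have hmid : ∀ j, y₁ ≤ j → j ≤ x₂ → ¬ PerW v (Win s n j) := by
    intro j h1 h2 hper
    exact hx₂ (SW j x₂ n n' h2 (by omega) hper)
  have hleft : ∀ j, y₁ - D ≤ j → j ≤ y₁ → ¬ PerW v (Win s n j) := by
    intro j h1 h2 hper
    exact hy₁ (SW j y₁ n n' h2 (by omega) hper)
  obtain ⟨q, hqge, hqper⟩ := perfar s v hPOW n (x₂ + 1)
  have hPex : ∃ b, x₂ ≤ b ∧ PerW v (Win s n (b + 1)) := by
    refine ⟨q - 1, by omega, ?_⟩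
    have e : q - 1 + 1 = q := by omega
    rw [e]; exact hqper
  set B := Nat.find hPex with hB
  obtain ⟨hBx, hBper⟩ := Nat.find_spec hPex
  have hBmin : ∀ j, x₂ < j → j ≤ B → ¬ PerW v (Win s n j) := by
    intro j h1 h2 hper
    have hlt : j - 1 < B := by omega
    refine Nat.find_min hPex hlt ⟨by omega, ?_⟩
    have e : j - 1 + 1 = j := by omega
    rw [e]; exact hper
  have hall : ∀ j, y₁ - D ≤ j → j ≤ B → ¬ PerW v (Win s n j) := by
    intro j h1 h2
    rcases le_or_gt j y₁ with h | h
    · exact hleft j h1 h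
    · rcases le_or_gt j x₂ with h' | h'
      · exact hmid j (by omega) h'
      · exact hBmin j h' h2
  have hrun := runbound s v p k n₀ hp hk hv hPOW hC hnn0 hnp hBper hall
  omega

end QS4b

namespace QS4c
variable {A : Type*}

lemma len_flatten_rep (W : List A) (t : ℕ) :
    ((List.replicate t W).flatten).length = t * W.length := by
  induction t with
  | zero => simp
  | succ t IH =>
    simp only [List.replicate_succ, List.flatten_cons, List.length_append, IH]
    rw [Nat.succ_mul]
    omega

lemma flatten_rep_get (W : List A) : ∀ (t m : ℕ)
    (h1 : m < ((List.replicate t W).flatten).length)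
    (h2 : m % W.length < W.length),
    ((List.replicate t W).flatten)[m]'h1 = W[m % W.length]'h2 := by
  intro t
  induction t with
  | zero => intro m h1 h2; simp at h1
  | succ t IH =>
    intro m h1 h2
    simp only [List.replicate_succ, List.flatten_cons] at h1 ⊢
    by_cases hm : m < W.length
    · rw [List.getElem_append_left hm]
      congr 1
      exact (Nat.mod_eq_of_lt hm).symm
    · push_neg at hm
      rw [List.getElem_append_right hm]
      have h1' : m - W.length < ((List.replicate t W).flatten).length := by
        simp only [List.length_append] at h1
        omega
      have hmod : (m - W.length) % W.length = m % W.length := by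
        conv_rhs => rw [← Nat.sub_add_cancel hm]
        rw [Nat.add_mod_right]
      rw [IH (m - W.length) h1' (hmod ▸ h2)]
      congr 1

end QS4c


theorem stmt4 {A : Type*} [Fintype A] (s : ℕ → A) (hs : QuasiSturmian s)
    (W : List A) (hW : W ≠ []) (hWf : IsFactor s W) :
    ∃ t : ℕ, 1 ≤ t ∧ ¬ IsFactor s ((List.replicate t W).flatten) := by
  by_contra hcon
  push_neg at hcon
  replace hcon : ∀ t, 1 ≤ t → IsFactor s ((List.replicate t W).flatten) := hcon
  obtain ⟨k, n₀, hk, hC⟩ := hs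
  set p := W.length with hpdef
  have hp : 0 < p := by rw [hpdef]; exact List.length_pos_iff.mpr hW
  set v : ℕ → A := fun i => W[i % p]'(Nat.mod_lt i hp) with hv0
  have hv : ∀ i, v (i + p) = v i := by
    intro i
    simp only [hv0]
    congr 1
    exact Nat.add_mod_right i p
  have hPOW : ∀ L, ∃ j, ∀ m < L, s (j + m) = v m := by
    intro L
    obtain ⟨j, hj⟩ := hcon (L + 1) (by omega)
    refine ⟨j, fun m hm => ?_⟩
    have hm' : m < ((List.replicate (L + 1) W).flatten).length := by
      rw [QS4c.len_flatten_rep, ← hpdef]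
      have h5 : L + 1 ≤ (L + 1) * p := Nat.le_mul_of_pos_right _ hp
      omega
    have h6 := hj ⟨m, hm'⟩
    have h7 : ((List.replicate (L + 1) W).flatten).get ⟨m, hm'⟩ = s (j + m) := h6
    rw [← h7, List.get_eq_getElem,
      QS4c.flatten_rep_get W (L + 1) m hm' (Nat.mod_lt m hp)]
  exact QS4b.keylemma s v p k n₀ hp hk hv hC hPOW
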